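/- Let p > 1 and q > 1 be coprime with p* p − q* q = 1, 0 ≤ q* < p, let m ∈ ℤ with m < q/p, and suppose for all positive integers k that S(k) ≥ ⌊k/(q − mp)⌋ where S(k) ≥ 0. Then for all positive integers k, (1/k)·(1 + ⌊(q*/p)k⌋ + ⌊k/(q − mp)⌋) > (p* − m q*)/(q − m p). -/
import Mathlib

lemma floor_int_div_rat (a b : ℤ) (hb : 0 < b) : ⌊(a : ℚ) / (b : ℚ)⌋ = a / b := by
  lift b to ℕ using hb.le
  exact_mod_cast Rat.floor_intCast_div_natCast a b

/-- For coprime `p, q > 1` with `p*p − q*q = 1`, `0 ≤ q* < p`, an integer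
`m < q/p`, and `S : ℤ → ℤ` with `S(k) ≥ ⌊k/(q − mp)⌋` and `S(k) ≥ 0` for all
`k > 0`: for all positive integers `k`,
`(1/k)·(1 + ⌊(q*/p)k⌋ + ⌊k/(q − mp)⌋) > (p* − m q*)/(q − m p)`. -/
theorem stmt17 (p q ps qs m : ℤ) (hp : 1 < p) (hq : 1 < q) (hco : IsCoprime p q)
    (h1 : ps * p - qs * q = 1) (h2 : 0 ≤ qs) (h3 : qs < p)
    (hm : (m : ℚ) < (q : ℚ) / p)
    (S : ℤ → ℤ) (hS0 : ∀ k : ℤ, 0 < k → 0 ≤ S k)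
    (hS : ∀ k : ℤ, 0 < k → ⌊(k : ℚ) / ((q : ℚ) - m * p)⌋ ≤ S k) :
    ∀ k : ℤ, 0 < k →
      (1 / (k : ℚ)) *
          ((1 + ⌊((qs : ℚ) / p) * k⌋ + ⌊(k : ℚ) / ((q : ℚ) - m * p)⌋ : ℤ) : ℚ)
        > ((ps : ℚ) - m * qs) / ((q : ℚ) - m * p) := by
  intro k hk
  have hp0 : (0 : ℚ) < (p : ℚ) := by exact_mod_cast hp.trans' one_pos
  have hd : 0 < q - m * p := by
    have : (m : ℚ) * p < q := (lt_div_iff₀ hp0).mp hm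
    have : ((m * p : ℤ) : ℚ) < ((q : ℤ) : ℚ) := by push_cast; linarith
    have := Int.cast_lt.mp this
    omega
  set d : ℤ := q - m * p with hdd
  have hcast : (q : ℚ) - m * p = (d : ℚ) := by push_cast [hdd]; ring
  have hf2 : ⌊(k : ℚ) / ((q : ℚ) - m * p)⌋ = k / d := by
    rw [hcast]; exact floor_int_div_rat k d hd
  have hf1 : ⌊((qs : ℚ) / p) * k⌋ = (qs * k) / p := by
    rw [show ((qs : ℚ) / p) * k = ((qs * k : ℤ) : ℚ) / (p : ℚ) by push_cast; ring]
    exact floor_int_div_rat _ p (by omega)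
  rw [hf1, hf2, hcast]
  set A : ℤ := qs * k / p with hA
  set B : ℤ := k / d with hB
  have hk0 : (0 : ℚ) < (k : ℚ) := by exact_mod_cast hk
  have hd0 : (0 : ℚ) < (d : ℚ) := by exact_mod_cast hd
  rw [gt_iff_lt, one_div, inv_mul_eq_div, div_lt_div_iff₀ hd0 hk0]
  have key : (ps - m * qs) * k < (1 + A + B) * d := by
    have hr := Int.mul_ediv_add_emod (qs * k) p
    have hr1 : 0 ≤ qs * k % p := Int.emod_nonneg _ (by omega)
    have hr2 : qs * k % p < p := Int.emod_lt_of_pos _ (by omega)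
    have hs := Int.mul_ediv_add_emod k d
    have hs1 : 0 ≤ k % d := Int.emod_nonneg _ (by omega)
    have hs2 : k % d < d := Int.emod_lt_of_pos _ hd
    have hB0 : 0 ≤ B := Int.ediv_nonneg hk.le hd.le
    -- multiply target by p
    have e1 : p * A = qs * k - qs * k % p := by rw [hA]; linarith
    have e2 : d * B = k - k % d := by rw [hB]; linarith
    have ident : p * ((1 + A + B) * d) - p * ((ps - m * qs) * k)
        = d * (p - qs * k % p) + (d * B) * (p - 1) - k % d := by
      linear_combination d * e1 + e2 + (qs * k) * hdd - k * h1
    have hb1 : d * 1 ≤ d * (p - qs * k % p) :=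
      mul_le_mul_of_nonneg_left (by omega) hd.le
    have hb2 : 0 ≤ (d * B) * (p - 1) :=
      mul_nonneg (mul_nonneg hd.le hB0) (by omega)
    have hmul : p * ((ps - m * qs) * k) < p * ((1 + A + B) * d) := by
      nlinarith [ident, hb1, hb2]
    exact lt_of_mul_lt_mul_left hmul (by omega)
  calc ((ps : ℚ) - m * qs) * k = (((ps - m * qs) * k : ℤ) : ℚ) := by push_cast; ring
    _ < (((1 + A + B) * d : ℤ) : ℚ) := by exact_mod_cast key
    _ = ((1 + A + B : ℤ) : ℚ) * d := by push_cast; ring
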